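/- Lipschitz continuity of smoothed robust value functions in the policy parameter: under Assumption 1, for every σ > 0, all θ₁, θ₂ ∈ Θ, and all s ∈ S, a ∈ A, |V_σ^{π_{θ₁}}(s) − V_σ^{π_{θ₂}}(s)| ≤ C_σ^V·‖θ₁ − θ₂‖ and |Q_σ^{π_{θ₁}}(s,a) − Q_σ^{π_{θ₂}}(s,a)| ≤ C_σ^V·‖θ₁ − θ₂‖. -/

import Mathlib

set_option autoImplicit false

open Finset

/-- Log-sum-exp: `LSE(σ, V) = (1/σ)·log (∑ s, exp (σ · V s))`. -/
noncomputable def lse {S : Type*} [Fintype S] (σ : ℝ) (V : S → ℝ) : ℝ :=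
  (1 / σ) * Real.log (∑ s, Real.exp (σ * V s))

set_option maxHeartbeats 1000000

lemma sum_exp_pos {S : Type*} [Fintype S] [Nonempty S] (σ : ℝ) (V : S → ℝ) :
    0 < ∑ s, Real.exp (σ * V s) :=
  Finset.sum_pos (fun s _ => Real.exp_pos _) univ_nonempty

lemma le_lse {S : Type*} [Fintype S] [Nonempty S] {σ : ℝ} (hσ : 0 < σ) (V : S → ℝ) (s : S) :
    V s ≤ lse σ V := by
  have h1 : Real.exp (σ * V s) ≤ ∑ t, Real.exp (σ * V t) :=
    Finset.single_le_sum (f := fun t => Real.exp (σ * V t)) (fun t _ => (Real.exp_pos _).le)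
      (mem_univ s)
  have h2 : σ * V s ≤ Real.log (∑ t, Real.exp (σ * V t)) := by
    rw [← Real.log_exp (σ * V s)]
    exact Real.log_le_log (Real.exp_pos _) h1
  have := mul_le_mul_of_nonneg_left h2 (le_of_lt (one_div_pos.mpr hσ))
  rw [lse]
  calc V s = (1/σ) * (σ * V s) := by field_simp
    _ ≤ _ := this

lemma lse_le {S : Type*} [Fintype S] [Nonempty S] {σ M : ℝ} (hσ : 0 < σ) {V : S → ℝ}
    (h : ∀ s, V s ≤ M) : lse σ V ≤ M + Real.log (Fintype.card S) / σ := by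
  have h1 : ∑ s, Real.exp (σ * V s) ≤ (Fintype.card S : ℝ) * Real.exp (σ * M) := by
    calc ∑ s, Real.exp (σ * V s) ≤ ∑ _s : S, Real.exp (σ * M) :=
          Finset.sum_le_sum (fun s _ => Real.exp_le_exp.mpr
            (mul_le_mul_of_nonneg_left (h s) hσ.le))
      _ = (Fintype.card S : ℝ) * Real.exp (σ * M) := by
          rw [Finset.sum_const, card_univ, nsmul_eq_mul]
  have hcard : (0:ℝ) < Fintype.card S := by exact_mod_cast Fintype.card_pos
  have h2 : Real.log (∑ s, Real.exp (σ * V s)) ≤ Real.log (Fintype.card S) + σ * M := by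
    calc Real.log (∑ s, Real.exp (σ * V s))
        ≤ Real.log ((Fintype.card S : ℝ) * Real.exp (σ * M)) :=
          Real.log_le_log (sum_exp_pos σ V) h1
      _ = Real.log (Fintype.card S) + σ * M := by
          rw [Real.log_mul (ne_of_gt hcard) (Real.exp_ne_zero _), Real.log_exp]
  rw [lse]
  have := mul_le_mul_of_nonneg_left h2 (le_of_lt (one_div_pos.mpr hσ))
  calc (1/σ) * Real.log (∑ s, Real.exp (σ * V s))
      ≤ (1/σ) * (Real.log (Fintype.card S) + σ * M) := this
    _ = M + Real.log (Fintype.card S) / σ := by field_simp; ring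

lemma lse_sub_le {S : Type*} [Fintype S] [Nonempty S] {σ d : ℝ} (hσ : 0 < σ) {V W : S → ℝ}
    (h : ∀ s, V s ≤ W s + d) : lse σ V ≤ lse σ W + d := by
  have h1 : ∑ s, Real.exp (σ * V s) ≤ (∑ s, Real.exp (σ * W s)) * Real.exp (σ * d) := by
    rw [Finset.sum_mul]
    refine Finset.sum_le_sum (fun s _ => ?_)
    rw [← Real.exp_add]
    exact Real.exp_le_exp.mpr (by nlinarith [h s])
  have h2 : Real.log (∑ s, Real.exp (σ * V s)) ≤ Real.log (∑ s, Real.exp (σ * W s)) + σ * d := by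
    calc Real.log (∑ s, Real.exp (σ * V s))
        ≤ Real.log ((∑ s, Real.exp (σ * W s)) * Real.exp (σ * d)) :=
          Real.log_le_log (sum_exp_pos σ V) h1
      _ = _ := by rw [Real.log_mul (ne_of_gt (sum_exp_pos σ W)) (Real.exp_ne_zero _),
            Real.log_exp]
  have := mul_le_mul_of_nonneg_left h2 (le_of_lt (one_div_pos.mpr hσ))
  rw [lse, lse]
  calc (1/σ) * Real.log (∑ s, Real.exp (σ * V s))
      ≤ (1/σ) * (Real.log (∑ s, Real.exp (σ * W s)) + σ * d) := this
    _ = (1/σ) * Real.log (∑ s, Real.exp (σ * W s)) + d := by field_simp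

lemma abs_lse_sub_le {S : Type*} [Fintype S] [Nonempty S] {σ d : ℝ} (hσ : 0 < σ) {V W : S → ℝ}
    (h : ∀ s, |V s - W s| ≤ d) : |lse σ V - lse σ W| ≤ d := by
  rw [abs_sub_le_iff]
  constructor
  · linarith [lse_sub_le hσ (d := d) (V := V) (W := W) (fun s => by linarith [abs_le.mp (h s)])]
  · linarith [lse_sub_le hσ (d := d) (V := W) (W := V) (fun s => by linarith [abs_le.mp (h s)])]

lemma weighted_abs_le {A : Type*} [Fintype A] {w f : A → ℝ} {M : ℝ}
    (hw : w ∈ stdSimplex ℝ A) (hf : ∀ a, |f a| ≤ M) : |∑ a, w a * f a| ≤ M := by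
  calc |∑ a, w a * f a| ≤ ∑ a, |w a * f a| := Finset.abs_sum_le_sum_abs _ _
    _ ≤ ∑ a, w a * M := Finset.sum_le_sum (fun a _ => by
        rw [abs_mul, abs_of_nonneg (hw.1 a)]
        exact mul_le_mul_of_nonneg_left (hf a) (hw.1 a))
    _ = M := by rw [← Finset.sum_mul, hw.2, one_mul]

/-- **Lipschitz continuity of the smoothed robust value functions in the policy parameter**:
under Assumption 1, for every `σ > 0` and all `θ₁, θ₂ ∈ Θ`, `s ∈ S`, `a ∈ A`,
`|V_σ^{π_{θ₁}}(s) - V_σ^{π_{θ₂}}(s)| ≤ C_σ^V·‖θ₁-θ₂‖` and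
`|Q_σ^{π_{θ₁}}(s,a) - Q_σ^{π_{θ₂}}(s,a)| ≤ C_σ^V·‖θ₁-θ₂‖`, where
`C_σ^V = |A|·k_π·C_σ/(1-γ)` and `C_σ = (1/(1-γ))·(1 + 2γR·log|S|/σ)`. -/
theorem stmt_14 {S A : Type*} [Fintype S] [Fintype A] [Nonempty S] [Nonempty A] {N : ℕ}
    (c : S → A → ℝ) (hc : ∀ s a, c s a ∈ Set.Icc (0 : ℝ) 1)
    (γ : ℝ) (hγ : γ ∈ Set.Ico (0 : ℝ) 1)
    (R : ℝ) (hR : R ∈ Set.Icc (0 : ℝ) 1)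
    (p : S → A → S → ℝ) (hp : ∀ s a, p s a ∈ stdSimplex ℝ S)
    (σ : ℝ) (hσ : 0 < σ)
    (kπ : ℝ) (hkπ : 0 < kπ)
    (Cσ CσV : ℝ)
    (hCσ : Cσ = (1 / (1 - γ)) * (1 + 2 * γ * R * Real.log (Fintype.card S) / σ))
    (hCσV : CσV = Fintype.card A * kπ * Cσ / (1 - γ))
    (Θ : Set (EuclideanSpace ℝ (Fin N))) (hΘ : Convex ℝ Θ)
    (π : EuclideanSpace ℝ (Fin N) → S → A → ℝ)
    (hπ : ∀ θ ∈ Θ, ∀ s, π θ s ∈ stdSimplex ℝ A)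
    (D : EuclideanSpace ℝ (Fin N) → S → A → EuclideanSpace ℝ (Fin N))
    (hD : ∀ θ ∈ Θ, ∀ s a, HasGradientWithinAt (fun θ' => π θ' s a) (D θ s a) Θ θ)
    (hDb : ∀ θ ∈ Θ, ∀ s a, ‖D θ s a‖ ≤ kπ)
    (Vσ : EuclideanSpace ℝ (Fin N) → S → ℝ)
    (hVσ : ∀ θ ∈ Θ, ∀ s, Vσ θ s = ∑ a, π θ s a * (c s a
      + γ * (1 - R) * ∑ s', p s a s' * Vσ θ s'
      + γ * R * lse σ (Vσ θ)))
    (Qσ : EuclideanSpace ℝ (Fin N) → S → A → ℝ)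
    (hQσ : ∀ θ ∈ Θ, ∀ s a, Qσ θ s a = c s a + γ * (1 - R) * ∑ s', p s a s' * Vσ θ s'
      + γ * R * lse σ (Vσ θ))
    (θ₁ θ₂ : EuclideanSpace ℝ (Fin N)) (h₁ : θ₁ ∈ Θ) (h₂ : θ₂ ∈ Θ) :
    (∀ s, |Vσ θ₁ s - Vσ θ₂ s| ≤ CσV * ‖θ₁ - θ₂‖) ∧
      (∀ s a, |Qσ θ₁ s a - Qσ θ₂ s a| ≤ CσV * ‖θ₁ - θ₂‖) := by
  obtain ⟨hγ0, hγ1⟩ := hγ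
  obtain ⟨hR0, hR1⟩ := hR
  have h1γ : 0 < 1 - γ := by linarith
  set L : ℝ := Real.log (Fintype.card S) / σ with hLdef
  have hL : 0 ≤ L := div_nonneg (Real.log_nonneg (by exact_mod_cast Fintype.card_pos)) hσ.le
  have hγRL : 0 ≤ γ * R * L := by positivity
  set M₀ : ℝ := (1 + γ * R * L) / (1 - γ) with hM₀def
  have hM₀pos : 0 < M₀ := div_pos (by linarith) h1γ
  have hCσL : Cσ = (1 + 2 * γ * R * L) / (1 - γ) := by
    rw [hCσ, hLdef]; ring
  have hM₀Cσ : M₀ ≤ Cσ := by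
    rw [hM₀def, hCσL]
    gcongr
    linarith
  -- generic Q-expression bound
  have hQgen : ∀ θ ∈ Θ, ∀ (M : ℝ), 0 ≤ M → (∀ s, |Vσ θ s| ≤ M) → ∀ s a,
      |c s a + γ * (1 - R) * ∑ s', p s a s' * Vσ θ s' + γ * R * lse σ (Vσ θ)|
        ≤ 1 + γ * M + γ * R * L := by
    intro θ hθ M hM hVM s a
    have hc1 := hc s a
    have hps : |∑ s', p s a s' * Vσ θ s'| ≤ M := weighted_abs_le (hp s a) hVM
    have hub : lse σ (Vσ θ) ≤ M + L := lse_le hσ (fun s' => (abs_le.mp (hVM s')).2)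
    have hlb : -(M + L) ≤ lse σ (Vσ θ) := by
      have h1 := le_lse hσ (Vσ θ) (Classical.arbitrary S)
      have h2 := (abs_le.mp (hVM (Classical.arbitrary S))).1
      linarith
    have habslse : |lse σ (Vσ θ)| ≤ M + L := abs_le.mpr ⟨hlb, hub⟩
    have e1 : |γ * (1 - R) * ∑ s', p s a s' * Vσ θ s'| ≤ γ * (1 - R) * M := by
      rw [abs_mul, abs_of_nonneg (by nlinarith : (0:ℝ) ≤ γ * (1 - R))]
      exact mul_le_mul_of_nonneg_left hps (by nlinarith)
    have e2 : |γ * R * lse σ (Vσ θ)| ≤ γ * R * (M + L) := by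
      rw [abs_mul, abs_of_nonneg (by positivity : (0:ℝ) ≤ γ * R)]
      exact mul_le_mul_of_nonneg_left habslse (by positivity)
    calc |c s a + γ * (1 - R) * ∑ s', p s a s' * Vσ θ s' + γ * R * lse σ (Vσ θ)|
        ≤ |c s a + γ * (1 - R) * ∑ s', p s a s' * Vσ θ s'| + |γ * R * lse σ (Vσ θ)| :=
          abs_add_le _ _
      _ ≤ |c s a| + |γ * (1 - R) * ∑ s', p s a s' * Vσ θ s'| + |γ * R * lse σ (Vσ θ)| := by
          linarith [abs_add_le (c s a) (γ * (1 - R) * ∑ s', p s a s' * Vσ θ s')]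
      _ ≤ 1 + γ * M + γ * R * L := by
          have : |c s a| ≤ 1 := abs_le.mpr ⟨by linarith [hc1.1], hc1.2⟩
          nlinarith
  -- boundedness of the value function
  have hVb : ∀ θ ∈ Θ, ∀ s, |Vσ θ s| ≤ M₀ := by
    intro θ hθ
    set Mθ : ℝ := univ.sup' univ_nonempty (fun s => |Vσ θ s|) with hMθdef
    have hle : ∀ s, |Vσ θ s| ≤ Mθ := fun s => by
      rw [hMθdef]; exact le_sup' (fun s => |Vσ θ s|) (mem_univ s)
    have hMθ0 : 0 ≤ Mθ := le_trans (abs_nonneg _) (hle (Classical.arbitrary S))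
    have hrec : Mθ ≤ 1 + γ * Mθ + γ * R * L := by
      apply Finset.sup'_le
      intro s _
      rw [hVσ θ hθ s]
      exact weighted_abs_le (hπ θ hθ s) (fun a => hQgen θ hθ Mθ hMθ0 hle s a)
    have hfin : Mθ ≤ M₀ := by
      rw [hM₀def, le_div_iff₀ h1γ]
      nlinarith
    exact fun s => (hle s).trans hfin
  -- Q values bounded by Cσ
  have hQb : ∀ θ ∈ Θ, ∀ s a, |Qσ θ s a| ≤ Cσ := by
    intro θ hθ s a
    rw [hQσ θ hθ s a]
    have := hQgen θ hθ M₀ hM₀pos.le (hVb θ hθ) s a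
    have hfix : 1 + γ * M₀ + γ * R * L = M₀ := by
      rw [hM₀def]; field_simp; ring
    linarith
  -- Lipschitzness of the policy
  have hπdiff : ∀ s a, |π θ₁ s a - π θ₂ s a| ≤ kπ * ‖θ₁ - θ₂‖ := by
    intro s a
    have key := hΘ.norm_image_sub_le_of_norm_hasFDerivWithin_le
      (f := fun θ' => π θ' s a)
      (f' := fun θ => (InnerProductSpace.toDual ℝ (EuclideanSpace ℝ (Fin N))) (D θ s a))
      (fun θ hθ => (hD θ hθ s a).hasFDerivWithinAt)
      (fun θ hθ => by
        rw [LinearIsometryEquiv.norm_map]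
        exact hDb θ hθ s a) h₂ h₁
    simpa [Real.norm_eq_abs] using key
  -- sup-distance between the two value functions
  set Δ : ℝ := univ.sup' univ_nonempty (fun s => |Vσ θ₁ s - Vσ θ₂ s|) with hΔdef
  have hΔle : ∀ s, |Vσ θ₁ s - Vσ θ₂ s| ≤ Δ := fun s => by
    rw [hΔdef]; exact le_sup' (fun s => |Vσ θ₁ s - Vσ θ₂ s|) (mem_univ s)
  have hΔ0 : 0 ≤ Δ := le_trans (abs_nonneg _) (hΔle (Classical.arbitrary S))
  -- contraction for Q-differences
  have hQdiff : ∀ s a, |Qσ θ₁ s a - Qσ θ₂ s a| ≤ γ * Δ := by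
    intro s a
    rw [hQσ θ₁ h₁ s a, hQσ θ₂ h₂ s a]
    have h1 : |(∑ s', p s a s' * Vσ θ₁ s') - ∑ s', p s a s' * Vσ θ₂ s'| ≤ Δ := by
      rw [← Finset.sum_sub_distrib]
      simp_rw [← mul_sub]
      exact weighted_abs_le (hp s a) hΔle
    have h2 : |lse σ (Vσ θ₁) - lse σ (Vσ θ₂)| ≤ Δ := abs_lse_sub_le hσ hΔle
    have e1 : |γ * (1 - R) * ((∑ s', p s a s' * Vσ θ₁ s') - ∑ s', p s a s' * Vσ θ₂ s')|
        ≤ γ * (1 - R) * Δ := by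
      rw [abs_mul, abs_of_nonneg (by nlinarith : (0:ℝ) ≤ γ * (1 - R))]
      exact mul_le_mul_of_nonneg_left h1 (by nlinarith)
    have e2 : |γ * R * (lse σ (Vσ θ₁) - lse σ (Vσ θ₂))| ≤ γ * R * Δ := by
      rw [abs_mul, abs_of_nonneg (by positivity : (0:ℝ) ≤ γ * R)]
      exact mul_le_mul_of_nonneg_left h2 (by positivity)
    calc |(c s a + γ * (1 - R) * ∑ s', p s a s' * Vσ θ₁ s' + γ * R * lse σ (Vσ θ₁))
          - (c s a + γ * (1 - R) * ∑ s', p s a s' * Vσ θ₂ s' + γ * R * lse σ (Vσ θ₂))|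
        = |γ * (1 - R) * ((∑ s', p s a s' * Vσ θ₁ s') - ∑ s', p s a s' * Vσ θ₂ s')
            + γ * R * (lse σ (Vσ θ₁) - lse σ (Vσ θ₂))| := by ring_nf
      _ ≤ _ + _ := abs_add_le _ _
      _ ≤ γ * (1 - R) * Δ + γ * R * Δ := add_le_add e1 e2
      _ = γ * Δ := by ring
  -- one-step bound for the value difference
  have hVrec : ∀ s, |Vσ θ₁ s - Vσ θ₂ s|
      ≤ (Fintype.card A : ℝ) * kπ * Cσ * ‖θ₁ - θ₂‖ + γ * Δ := by
    intro s
    have e₁ : Vσ θ₁ s = ∑ a, π θ₁ s a * Qσ θ₁ s a := by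
      rw [hVσ θ₁ h₁ s]
      exact Finset.sum_congr rfl (fun a _ => by rw [hQσ θ₁ h₁ s a])
    have e₂ : Vσ θ₂ s = ∑ a, π θ₂ s a * Qσ θ₂ s a := by
      rw [hVσ θ₂ h₂ s]
      exact Finset.sum_congr rfl (fun a _ => by rw [hQσ θ₂ h₂ s a])
    have split : Vσ θ₁ s - Vσ θ₂ s
        = (∑ a, (π θ₁ s a - π θ₂ s a) * Qσ θ₁ s a)
          + ∑ a, π θ₂ s a * (Qσ θ₁ s a - Qσ θ₂ s a) := by
      rw [e₁, e₂, ← Finset.sum_add_distrib, ← Finset.sum_sub_distrib]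
      exact Finset.sum_congr rfl (fun a _ => by ring)
    have hfirst : |∑ a, (π θ₁ s a - π θ₂ s a) * Qσ θ₁ s a|
        ≤ (Fintype.card A : ℝ) * kπ * Cσ * ‖θ₁ - θ₂‖ := by
      calc |∑ a, (π θ₁ s a - π θ₂ s a) * Qσ θ₁ s a|
          ≤ ∑ a, |(π θ₁ s a - π θ₂ s a) * Qσ θ₁ s a| := Finset.abs_sum_le_sum_abs _ _
        _ ≤ ∑ _a : A, kπ * ‖θ₁ - θ₂‖ * Cσ := by
            refine Finset.sum_le_sum (fun a _ => ?_)
            rw [abs_mul]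
            exact mul_le_mul (hπdiff s a) (hQb θ₁ h₁ s a) (abs_nonneg _) (by positivity)
        _ = (Fintype.card A : ℝ) * (kπ * ‖θ₁ - θ₂‖ * Cσ) := by
            rw [Finset.sum_const, card_univ, nsmul_eq_mul]
        _ = (Fintype.card A : ℝ) * kπ * Cσ * ‖θ₁ - θ₂‖ := by ring
    have hsecond : |∑ a, π θ₂ s a * (Qσ θ₁ s a - Qσ θ₂ s a)| ≤ γ * Δ :=
      weighted_abs_le (hπ θ₂ h₂ s) (fun a => hQdiff s a)
    calc |Vσ θ₁ s - Vσ θ₂ s|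
        ≤ |∑ a, (π θ₁ s a - π θ₂ s a) * Qσ θ₁ s a|
          + |∑ a, π θ₂ s a * (Qσ θ₁ s a - Qσ θ₂ s a)| := by
          rw [split]; exact abs_add_le _ _
      _ ≤ _ := add_le_add hfirst hsecond
  -- fixed-point bound on Δ
  have hΔbound : Δ ≤ CσV * ‖θ₁ - θ₂‖ := by
    have hΔrec : Δ ≤ (Fintype.card A : ℝ) * kπ * Cσ * ‖θ₁ - θ₂‖ + γ * Δ :=
      Finset.sup'_le _ _ (fun s _ => hVrec s)
    rw [hCσV, div_mul_eq_mul_div, le_div_iff₀ h1γ]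
    nlinarith
  refine ⟨fun s => (hΔle s).trans hΔbound, fun s a => ?_⟩
  calc |Qσ θ₁ s a - Qσ θ₂ s a| ≤ γ * Δ := hQdiff s a
    _ ≤ Δ := by nlinarith
    _ ≤ CσV * ‖θ₁ - θ₂‖ := hΔbound
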